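/- Let A be a p×p entrywise nonnegative real matrix with spectral radius strictly less than 1, let B be a p×q entrywise nonnegative real matrix, and let 0 ≤ r ≤ 1 be a real number such that for every row index i one has Σ_j A_{ij} + Σ_k B_{ik} ≤ r. Then every row sum of (I − A)⁻¹ B is at most r; that is, ((I − A)⁻¹ B 𝟙)_i ≤ r for every i, where 𝟙 is the all-ones vector in ℝ^q. -/

import Mathlib

open Matrix Finset Filter Topology
open scoped NNReal ENNReal

attribute [local instance] Matrix.linftyOpNormedAddCommGroup Matrix.linftyOpNormedRing
  Matrix.linftyOpNormedAlgebra

private lemma pow_entry_nonneg {p : ℕ} {A : Matrix (Fin p) (Fin p) ℝ}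
    (hA : ∀ i j, 0 ≤ A i j) : ∀ (n : ℕ) (i j : Fin p), 0 ≤ (A ^ n) i j := by
  intro n
  induction n with
  | zero =>
    intro i j
    rw [pow_zero, Matrix.one_apply]
    split <;> norm_num
  | succ n ih =>
    intro i j
    rw [pow_succ, Matrix.mul_apply]
    exact Finset.sum_nonneg fun k _ => mul_nonneg (ih i k) (hA k j)

private lemma entry_norm_le_linfty {p : ℕ} [NeZero p] (M : Matrix (Fin p) (Fin p) ℂ)
    (i j : Fin p) : ‖M i j‖ ≤ ‖M‖ := by
  rw [Matrix.linfty_opNorm_def]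
  have h1 : ‖M i j‖₊ ≤ ∑ j', ‖M i j'‖₊ :=
    Finset.single_le_sum (f := fun j' => ‖M i j'‖₊) (fun _ _ => zero_le) (mem_univ j)
  have h2 : (∑ j', ‖M i j'‖₊) ≤ (Finset.univ : Finset (Fin p)).sup fun i' => ∑ j', ‖M i' j'‖₊ :=
    Finset.le_sup (f := fun i' => ∑ j', ‖M i' j'‖₊) (mem_univ i)
  calc ‖M i j‖ = ((‖M i j‖₊ : ℝ≥0) : ℝ) := rfl
    _ ≤ _ := by exact_mod_cast h1.trans h2

/-- If `A` is an entrywise nonnegative `p × p` real matrix with spectral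
radius `< 1`, `B` is an entrywise nonnegative `p × q` real matrix, and `0 ≤ r ≤ 1` is such
that every combined row sum `Σ_j A i j + Σ_k B i k` is at most `r`, then every row sum of
`(I - A)⁻¹ B` is at most `r`. -/
theorem stmt2 (p q : ℕ) (A : Matrix (Fin p) (Fin p) ℝ) (B : Matrix (Fin p) (Fin q) ℝ)
    (hA : ∀ i j, 0 ≤ A i j) (hB : ∀ i j, 0 ≤ B i j)
    (hsr : ∀ μ ∈ spectrum ℂ (A.map (Complex.ofReal)), ‖μ‖ < 1)
    (r : ℝ) (hr0 : 0 ≤ r) (hr1 : r ≤ 1)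
    (hrow : ∀ i, (∑ j, A i j) + (∑ k, B i k) ≤ r) :
    ∀ i, ((1 - A)⁻¹ * B).mulVec (fun _ => (1 : ℝ)) i ≤ r := by
  intro i
  rcases Nat.eq_zero_or_pos p with hp | hp
  · subst hp; exact i.elim0
  haveI : NeZero p := ⟨hp.ne'⟩
  set A' : Matrix (Fin p) (Fin p) ℂ := A.map Complex.ofReal with hA'def
  haveI : CompleteSpace (Matrix (Fin p) (Fin p) ℂ) := FiniteDimensional.complete ℂ _
  -- A' to powers relates to A
  have hmap : ∀ n : ℕ, A' ^ n = (A ^ n).map Complex.ofReal := by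
    intro n
    have : A' = Complex.ofRealHom.mapMatrix A := rfl
    rw [this, ← map_pow, RingHom.mapMatrix_apply]
    rfl
  -- spectral radius < 1
  have hρ : spectralRadius ℂ A' < 1 := by
    have hne : (spectrum ℂ A').Nonempty := spectrum.nonempty A'
    have h := spectrum.spectralRadius_lt_of_forall_lt_of_nonempty hne (r := 1)
      (fun k hk => by
        have := hsr k hk
        rw [← NNReal.coe_lt_coe, coe_nnnorm, NNReal.coe_one]
        exact this)
    simpa using h
  -- entries of A^n tend to 0
  have hpow : ∀ i j : Fin p, Tendsto (fun n => (A ^ n) i j) atTop (𝓝 0) := by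
    obtain ⟨c, hc1, hc2⟩ := exists_between hρ
    lift c to ℝ≥0 using (hc2.trans_le le_top).ne
    have hgel := spectrum.pow_nnnorm_pow_one_div_tendsto_nhds_spectralRadius A'
    have hev : ∀ᶠ n : ℕ in atTop, (‖A' ^ n‖₊ : ℝ≥0∞) ^ (1 / (n : ℝ)) < c :=
      hgel.eventually_lt_const hc1
    have hbound : ∀ᶠ n : ℕ in atTop, ‖A' ^ n‖ ≤ (c : ℝ) ^ n := by
      filter_upwards [hev, eventually_gt_atTop 0] with n hn hn0
      have hne : (n : ℝ) ≠ 0 := Nat.cast_ne_zero.mpr hn0.ne'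
      have := ENNReal.rpow_le_rpow hn.le (by positivity : (0:ℝ) ≤ (n:ℝ))
      rw [← ENNReal.rpow_mul, one_div, inv_mul_cancel₀ hne, ENNReal.rpow_one] at this
      have h2 : (‖A' ^ n‖₊ : ℝ≥0∞) ≤ (c : ℝ≥0∞) ^ ((n : ℕ) : ℝ) := this
      rw [← ENNReal.coe_rpow_of_nonneg _ (by positivity : (0:ℝ) ≤ ((n:ℕ):ℝ))] at h2
      have h3 : ‖A' ^ n‖₊ ≤ c ^ ((n : ℕ) : ℝ) := ENNReal.coe_le_coe.mp h2
      calc ‖A' ^ n‖ = ((‖A' ^ n‖₊ : ℝ≥0) : ℝ) := rfl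
        _ ≤ ((c ^ (n : ℝ) : ℝ≥0) : ℝ) := by exact_mod_cast h3
        _ = (c : ℝ) ^ (n : ℝ) := by
            rw [NNReal.coe_rpow]
        _ = (c : ℝ) ^ n := by rw [Real.rpow_natCast]
    intro i j
    have hcR : (c : ℝ) < 1 := by
      have := ENNReal.coe_lt_coe.mp (by simpa using hc2)
      exact_mod_cast this
    have hg : Tendsto (fun n : ℕ => (c : ℝ) ^ n) atTop (𝓝 0) :=
      tendsto_pow_atTop_nhds_zero_of_lt_one c.coe_nonneg hcR
    refine squeeze_zero' (Eventually.of_forall fun n => pow_entry_nonneg hA n i j) ?_ hg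
    filter_upwards [hbound] with n hn
    calc (A ^ n) i j ≤ |(A ^ n) i j| := le_abs_self _
      _ = ‖((A ^ n) i j : ℂ)‖ := by rw [Complex.norm_real, Real.norm_eq_abs]
      _ = ‖(A' ^ n) i j‖ := by rw [hmap n]; rfl
      _ ≤ ‖A' ^ n‖ := entry_norm_le_linfty _ i j
      _ ≤ (c : ℝ) ^ n := hn
  -- invertibility of 1 - A
  have hdet : IsUnit (1 - A).det := by
    by_contra h
    have h0 : (1 - A).det = 0 := by simpa [isUnit_iff_ne_zero] using h
    have hmem : (1 : ℂ) ∈ spectrum ℂ A' := by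
      rw [spectrum.mem_iff]
      intro hu
      have hu' : IsUnit (1 - A') := by simpa [Algebra.algebraMap_eq_smul_one] using hu
      have : IsUnit (1 - A').det := (Matrix.isUnit_iff_isUnit_det _).mp hu'
      have hd : (1 - A').det = 0 := by
        have hmap1 : Complex.ofRealHom.mapMatrix (1 - A) = 1 - A' := by
          rw [_root_.map_sub, _root_.map_one]; rfl
        rw [← hmap1, ← RingHom.map_det, h0, _root_.map_zero]
      rw [hd] at this
      exact this.ne_zero rfl
    simpa using hsr 1 hmem
  set C := (1 - A)⁻¹ with hCdef
  have hCl : C * (1 - A) = 1 := Matrix.nonsing_inv_mul _ hdet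
  have hCr : (1 - A) * C = 1 := Matrix.mul_nonsing_inv _ hdet
  -- partial geometric sums
  have hSn : ∀ n : ℕ, (∑ k ∈ range n, A ^ k) = C - A ^ n * C := by
    intro n
    have h1 := geom_sum_mul A n
    have h2 : (∑ k ∈ range n, A ^ k) * (1 - A) = 1 - A ^ n := by
      calc (∑ k ∈ range n, A ^ k) * (1 - A)
          = -((∑ k ∈ range n, A ^ k) * (A - 1)) := by rw [← mul_neg, neg_sub]
        _ = -(A ^ n - 1) := by rw [h1]
        _ = 1 - A ^ n := by rw [neg_sub]
    calc (∑ k ∈ range n, A ^ k) = (∑ k ∈ range n, A ^ k) * ((1 - A) * C) := by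
          rw [hCr, mul_one]
      _ = ((∑ k ∈ range n, A ^ k) * (1 - A)) * C := by rw [mul_assoc]
      _ = (1 - A ^ n) * C := by rw [h2]
      _ = C - A ^ n * C := by rw [sub_mul, one_mul]
  -- nonnegativity of C entries
  have hCnn : ∀ i j, 0 ≤ C i j := by
    intro i j
    have hlim : Tendsto (fun n => (∑ k ∈ range n, A ^ k) i j) atTop (𝓝 (C i j)) := by
      have ht : Tendsto (fun n => ∑ k, (A ^ n) i k * C k j) atTop (𝓝 0) := by
        have := tendsto_finset_sum (univ : Finset (Fin p))
          (fun k _ => (hpow i k).mul_const (C k j))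
        simpa using this
      have := tendsto_const_nhds (x := C i j) (f := atTop (α := ℕ)) |>.sub ht
      rw [sub_zero] at this
      refine this.congr fun n => ?_
      rw [hSn n, Matrix.sub_apply, Matrix.mul_apply]
    refine ge_of_tendsto' hlim fun n => ?_
    rw [Matrix.sum_apply]
    exact Finset.sum_nonneg fun k _ => pow_entry_nonneg hA k i j
  -- C * A = C - 1 and C = 1 + A * C
  have hCl' : C - C * A = 1 := by rw [← hCl, mul_sub, mul_one]
  have hCr' : C - A * C = 1 := by rw [← hCr, sub_mul, one_mul]
  have hCA : C * A = C - 1 :=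
    eq_sub_of_add_eq (by rw [add_comm]; exact (sub_eq_iff_eq_add.mp hCl').symm)
  have hAC : C = 1 + A * C := sub_eq_iff_eq_add.mp hCr'
  -- row sums
  set s : ℝ := ∑ k, C i k with hs
  have hs1 : 1 ≤ s := by
    have : s = ∑ k, ((1 : Matrix (Fin p) (Fin p) ℝ) i k + (A * C) i k) := by
      rw [hs]
      refine Finset.sum_congr rfl fun k _ => ?_
      conv_lhs => rw [hAC]
      rw [Matrix.add_apply]
    rw [this, Finset.sum_add_distrib]
    have h1 : ∑ k, (1 : Matrix (Fin p) (Fin p) ℝ) i k = 1 := by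
      simp [Matrix.one_apply, Finset.sum_ite_eq' univ i]
    rw [h1]
    have h2 : 0 ≤ ∑ k, (A * C) i k :=
      Finset.sum_nonneg fun k _ => by
        rw [Matrix.mul_apply]
        exact Finset.sum_nonneg fun l _ => mul_nonneg (hA i l) (hCnn l k)
    linarith
  have hCAsum : ∑ k, (C * A) i k = s - 1 := by
    rw [hCA]
    have h1 : ∑ k, ((C - 1) : Matrix (Fin p) (Fin p) ℝ) i k
        = (∑ k, C i k) - ∑ k, (1 : Matrix (Fin p) (Fin p) ℝ) i k := by
      rw [← Finset.sum_sub_distrib]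
      exact Finset.sum_congr rfl fun k _ => by rw [Matrix.sub_apply]
    rw [h1]
    simp [Matrix.one_apply, Finset.sum_ite_eq' univ i, hs]
  -- main computation
  have hx : ((1 - A)⁻¹ * B).mulVec (fun _ => (1 : ℝ)) i = ∑ k, C i k * (∑ j, B k j) := by
    rw [Matrix.mulVec]
    simp only [dotProduct, mul_one]
    rw [← hCdef]
    calc ∑ j, (C * B) i j = ∑ j, ∑ k, C i k * B k j := by
          refine Finset.sum_congr rfl fun j _ => ?_
          rw [Matrix.mul_apply]
      _ = ∑ k, ∑ j, C i k * B k j := Finset.sum_comm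
      _ = ∑ k, C i k * (∑ j, B k j) := by
          refine Finset.sum_congr rfl fun k _ => ?_
          rw [Finset.mul_sum]
  rw [hx]
  have hstep : ∑ k, C i k * (∑ j, B k j) ≤ ∑ k, C i k * (r - ∑ l, A k l) := by
    refine Finset.sum_le_sum fun k _ => ?_
    have : (∑ j, B k j) ≤ r - ∑ l, A k l := by linarith [hrow k]
    exact mul_le_mul_of_nonneg_left this (hCnn i k)
  have heq : ∑ k, C i k * (r - ∑ l, A k l) = r * s - (s - 1) := by
    have h1 : ∑ k, C i k * (r - ∑ l, A k l)
        = (∑ k, C i k * r) - ∑ k, C i k * (∑ l, A k l) := by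
      rw [← Finset.sum_sub_distrib]
      exact Finset.sum_congr rfl fun k _ => by ring
    have h2 : ∑ k, C i k * (∑ l, A k l) = ∑ l, (C * A) i l := by
      calc ∑ k, C i k * (∑ l, A k l) = ∑ k, ∑ l, C i k * A k l := by
            refine Finset.sum_congr rfl fun k _ => ?_
            rw [Finset.mul_sum]
        _ = ∑ l, ∑ k, C i k * A k l := Finset.sum_comm
        _ = ∑ l, (C * A) i l := by
            refine Finset.sum_congr rfl fun l _ => ?_
            rw [Matrix.mul_apply]
    rw [h1, h2, hCAsum, ← Finset.sum_mul, ← hs]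
    ring
  calc ∑ k, C i k * (∑ j, B k j) ≤ r * s - (s - 1) := heq ▸ hstep
    _ = 1 - (1 - r) * s := by ring
    _ ≤ 1 - (1 - r) * 1 := by nlinarith
    _ = r := by ring
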